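/- Let n ≥ 1 and let e, f be projections in D_n. Then e and f are Murray–von Neumann equivalent in D_n (i.e., there exist x, y ∈ D_n with e = x·y and f = y·x) if and only if the trace of the upper-left n×n block of e(0) equals the trace of the upper-left n×n block of f(0) and the trace of the lower-right n×n block of e(0) equals the trace of the lower-right n×n block of f(0). (This is the content of Corollary 10.5, that evaluation at 0 induces an isomorphism V(D) ≅ ℤ⁺ × ℤ⁺, stated for projections in matrix algebras over D.) -/

import Mathlib

open unitInterval

/-- `D_n`: the C*-subalgebra of `C([0,1], M_{2n}(ℂ))` (indices split as
`Fin n ⊕ Fin n`) consisting of the continuous functions `x` such that `x(0)` is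
block-diagonal with two `n × n` blocks. -/
def Dn (n : ℕ) : Set C(I, Matrix (Fin n ⊕ Fin n) (Fin n ⊕ Fin n) ℂ) :=
  {x | ∀ i j : Fin n ⊕ Fin n, i.isLeft ≠ j.isLeft → x 0 i j = 0}

/-! ### Auxiliary material -/

section Aux

/-- Similarity with explicit two-sided inverse. -/
def MSim {k : Type*} [Fintype k] [DecidableEq k] (A B : Matrix k k ℂ) : Prop :=
  ∃ S S' : Matrix k k ℂ, S * S' = 1 ∧ S' * S = 1 ∧ S * A * S' = B

lemma MSim.symm {k : Type*} [Fintype k] [DecidableEq k] {A B : Matrix k k ℂ}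
    (h : MSim A B) : MSim B A := by
  obtain ⟨S, S', h1, h2, h3⟩ := h
  refine ⟨S', S, h2, h1, ?_⟩
  rw [← h3, show S' * (S * A * S') * S = (S' * S) * A * (S' * S) by noncomm_ring, h2]
  simp

lemma MSim.trans {k : Type*} [Fintype k] [DecidableEq k] {A B C : Matrix k k ℂ} (hab : MSim A B)
    (hbc : MSim B C) : MSim A C := by
  obtain ⟨S, S', h1, h2, h3⟩ := hab
  obtain ⟨T, T', g1, g2, g3⟩ := hbc
  refine ⟨T * S, S' * T', ?_, ?_, ?_⟩
  · rw [show T * S * (S' * T') = T * (S * S') * T' by noncomm_ring, h1]; simpa using g1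
  · rw [show S' * T' * (T * S) = S' * (T' * T) * S by noncomm_ring, g2]; simpa using h2
  · rw [← g3, ← h3]; noncomm_ring

/-- Conjugating a diagonal matrix by a permutation. -/
lemma MSim.diagonal_perm {k : Type*} [Fintype k] [DecidableEq k] (d : k → ℂ) (τ : Equiv.Perm k) :
    MSim (Matrix.diagonal (d ∘ τ)) (Matrix.diagonal d) := by
  refine ⟨(1 : Matrix k k ℂ).submatrix id τ, (1 : Matrix k k ℂ).submatrix τ id, ?_, ?_, ?_⟩
  · rw [Matrix.submatrix_mul_equiv (1 : Matrix k k ℂ) (1 : Matrix k k ℂ) id τ id]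
    simp
  · have h := Matrix.one_submatrix_mul (o := k) (α := ℂ) (⇑τ) (Equiv.refl k)
      ((1 : Matrix k k ℂ).submatrix id ⇑τ)
    simp only [Equiv.coe_refl, Matrix.submatrix_id_id] at h ⊢
    rw [h]
    simp only [Equiv.refl_symm, Equiv.coe_refl, Function.id_comp, Matrix.submatrix_submatrix,
      Function.comp_id]
    exact Matrix.submatrix_one (⇑τ) τ.injective
  · rw [Matrix.one_submatrix_mul id τ, Matrix.mul_submatrix_one τ id]
    simp only [Matrix.submatrix_submatrix, Function.comp_id, Function.id_comp]
    rw [Matrix.submatrix_diagonal_equiv]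
    ext i j
    rcases eq_or_ne i j with rfl | h
    · simp
    · simp [Matrix.diagonal_apply_ne _ h, Matrix.diagonal_apply_ne _ (fun hh => h (by simpa using congrArg ⇑τ (congrArg ⇑τ.symm hh) ) )]

/-- A Hermitian idempotent is similar to a 0/1 diagonal matrix whose diagonal sums to the trace. -/
lemma herm_idem_diag {k : Type*} [Fintype k] [DecidableEq k] {E : Matrix k k ℂ}
    (hh : E.conjTranspose = E) (hi : E * E = E) :
    ∃ d : k → ℂ, (∀ i, d i = 0 ∨ d i = 1) ∧ (∑ i, d i = E.trace) ∧
      MSim (Matrix.diagonal d) E := by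
  have hE : E.IsHermitian := hh
  set U : Matrix k k ℂ := ↑hE.eigenvectorUnitary with hU
  have hU1 : star U * U = 1 := (Unitary.mem_iff.mp hE.eigenvectorUnitary.2).1
  have hU2 : U * star U = 1 := (Unitary.mem_iff.mp hE.eigenvectorUnitary.2).2
  set d : k → ℂ := RCLike.ofReal ∘ hE.eigenvalues with hd
  have hspec : E = U * Matrix.diagonal d * star U := hE.spectral_theorem
  have cancel : ∀ M : Matrix k k ℂ, star U * (U * M * star U) * U = M := by
    intro M
    calc star U * (U * M * star U) * U = (star U * U) * M * (star U * U) := by noncomm_ring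
      _ = M := by rw [hU1]; simp
  have hDD : Matrix.diagonal d * Matrix.diagonal d = Matrix.diagonal d := by
    have h1 : U * (Matrix.diagonal d * Matrix.diagonal d) * star U
        = U * Matrix.diagonal d * star U := by
      calc U * (Matrix.diagonal d * Matrix.diagonal d) * star U
          = (U * Matrix.diagonal d * star U) * (U * Matrix.diagonal d * star U) := by
            rw [show (U * Matrix.diagonal d * star U) * (U * Matrix.diagonal d * star U)
              = U * (Matrix.diagonal d * ((star U * U) * Matrix.diagonal d)) * star U by
                noncomm_ring, hU1, one_mul]
        _ = U * Matrix.diagonal d * star U := by rw [← hspec, hi]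
    rw [← cancel (Matrix.diagonal d * Matrix.diagonal d), h1, cancel]
  refine ⟨d, ?_, ?_, U, star U, hU2, hU1, hspec.symm⟩
  · intro i
    have h3 := congrArg (fun M => M i i) hDD
    simp only [Matrix.diagonal_mul_diagonal, Matrix.diagonal_apply_eq] at h3
    have h4 : d i * (d i - 1) = 0 := by ring_nf; linear_combination h3
    rcases mul_eq_zero.mp h4 with h | h
    · exact Or.inl h
    · exact Or.inr (by linear_combination h)
  · rw [hspec, Matrix.trace_mul_cycle, hU1, one_mul,
      Matrix.trace_diagonal]

lemma subtypeCongr_prop {k : Type*} {p₁ p₂ : k → Prop} [DecidablePred p₁] [DecidablePred p₂]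
    (e₁ : {x // p₁ x} ≃ {x // p₂ x}) (e₂ : {x // ¬ p₁ x} ≃ {x // ¬ p₂ x}) (x : k) :
    (p₂ (Equiv.subtypeCongr e₁ e₂ x) ↔ p₁ x) := by
  by_cases h : p₁ x
  · simp only [Equiv.subtypeCongr, Equiv.trans_apply, Equiv.sumCompl_symm_apply_of_pos h,
      Equiv.sumCongr_apply, Sum.map_inl, Equiv.sumCompl_apply_inl]
    exact iff_of_true (e₁ ⟨x, h⟩).2 h
  · simp only [Equiv.subtypeCongr, Equiv.trans_apply, Equiv.sumCompl_symm_apply_of_neg h,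
      Equiv.sumCongr_apply, Sum.map_inr, Equiv.sumCompl_apply_inr]
    exact iff_of_false (e₂ ⟨x, h⟩).2 h

/-- Two `{0,1}`-valued functions with equal sums differ by a permutation. -/
lemma perm_of_sum_eq {k : Type*} [Fintype k] [DecidableEq k] (d₁ d₂ : k → ℂ)
    (h₁ : ∀ i, d₁ i = 0 ∨ d₁ i = 1) (h₂ : ∀ i, d₂ i = 0 ∨ d₂ i = 1)
    (hs : ∑ i, d₁ i = ∑ i, d₂ i) : ∃ τ : Equiv.Perm k, d₁ = d₂ ∘ τ := by
  classical
  have hsum : ∀ (d : k → ℂ), (∀ i, d i = 0 ∨ d i = 1) →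
      ∑ i, d i = ((Finset.univ.filter (fun i => d i = 1)).card : ℂ) := by
    intro d hd
    rw [← Finset.sum_boole]
    refine Finset.sum_congr rfl fun i _ => ?_
    rcases hd i with h | h <;> simp [h]
  have hcard : (Finset.univ.filter (fun i => d₁ i = 1)).card
      = (Finset.univ.filter (fun i => d₂ i = 1)).card := by
    have := hs
    rw [hsum d₁ h₁, hsum d₂ h₂] at this
    exact_mod_cast this
  have hc1 : Fintype.card {x // d₁ x = 1} = Fintype.card {x // d₂ x = 1} := by
    rw [Fintype.card_subtype, Fintype.card_subtype]; exact hcard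
  have hc2 : Fintype.card {x // ¬ d₁ x = 1} = Fintype.card {x // ¬ d₂ x = 1} := by
    rw [Fintype.card_subtype_compl, Fintype.card_subtype_compl, hc1]
  refine ⟨Equiv.subtypeCongr (Fintype.equivOfCardEq hc1) (Fintype.equivOfCardEq hc2), ?_⟩
  funext x
  have key := subtypeCongr_prop (Fintype.equivOfCardEq hc1) (Fintype.equivOfCardEq hc2) x
  simp only [Function.comp_apply]
  by_cases h : d₁ x = 1
  · rw [h, (key.2 h)]
  · have hx0 : d₁ x = 0 := (h₁ x).resolve_right h
    have : ¬ d₂ (Equiv.subtypeCongr (Fintype.equivOfCardEq hc1) (Fintype.equivOfCardEq hc2) x) = 1 :=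
      fun hh => h (key.1 hh)
    rw [hx0, ((h₂ _).resolve_right this)]

/-- Equal-trace Hermitian idempotents over ℂ are similar. -/
lemma msim_of_trace_eq {k : Type*} [Fintype k] [DecidableEq k] {E F : Matrix k k ℂ}
    (hEh : E.conjTranspose = E) (hEi : E * E = E)
    (hFh : F.conjTranspose = F) (hFi : F * F = F)
    (htr : E.trace = F.trace) : MSim E F := by
  obtain ⟨d₁, hd₁, hs₁, hsim₁⟩ := herm_idem_diag hEh hEi
  obtain ⟨d₂, hd₂, hs₂, hsim₂⟩ := herm_idem_diag hFh hFi
  obtain ⟨τ, hτ⟩ := perm_of_sum_eq d₁ d₂ hd₁ hd₂ (by rw [hs₁, hs₂, htr])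
  have : MSim (Matrix.diagonal d₁) (Matrix.diagonal d₂) := by
    rw [hτ]; exact MSim.diagonal_perm d₂ τ
  exact (hsim₁.symm.trans this).trans hsim₂

end Aux

section Path

variable {ι : Type*} [Fintype ι] [DecidableEq ι]

/-- The standard "chaining" intertwiner between nearby projections. -/
noncomputable def zmat (q p : Matrix ι ι ℂ) : Matrix ι ι ℂ :=
  q * p + (1 - q) * (1 - p)

/-- Iterated chaining along a path of projections. -/
noncomputable def chain (P : ℝ → Matrix ι ι ℂ) (h : ℝ) : ℕ → ℝ → Matrix ι ι ℂ
  | 0 => fun _ => 1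
  | (k + 1) => fun t =>
      zmat (P (min t ((k + 1 : ℕ) * h))) (P (min t ((k : ℕ) * h))) * chain P h k t

lemma zmat_self {p : Matrix ι ι ℂ} (hp : p * p = p) : zmat p p = 1 := by
  unfold zmat
  have : p * p + (1 - p) * (1 - p) = (p * p - p) + ((p * p - p) + 1) := by noncomm_ring
  rw [this, hp]; simp

lemma zmat_intertwine {q p : Matrix ι ι ℂ} (hq : q * q = q) (hp : p * p = p) :
    zmat q p * p = q * zmat q p := by
  unfold zmat
  have h1 : (q * p + (1 - q) * (1 - p)) * p = q * (p * p) + (1 - q) * (p - p * p) := by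
    noncomm_ring
  have h2 : q * (q * p + (1 - q) * (1 - p)) = (q * q) * p + (q - q * q) * (1 - p) := by
    noncomm_ring
  rw [h1, h2, hp, hq]
  simp

section norm
open scoped Matrix.Norms.L2Operator

lemma zmat_isUnit [Nonempty ι] {q p : Matrix ι ι ℂ} (hqs : star q = q) (hq : q * q = q)
    (hnorm : ‖p - q‖ < 1) : IsUnit (zmat q p) := by
  have hz : zmat q p = 1 - (q + q - 1) * (q - p) := by
    have expand : (1 : Matrix ι ι ℂ) - (q + q - 1) * (q - p)
        = q * p + (1 - q) * (1 - p) + ((q + q) - ((q * q) + (q * q))) := by noncomm_ring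
    rw [expand, hq]
    simp [zmat]
  have hw : star (q + q - 1) * (q + q - 1) = 1 := by
    rw [star_sub, star_add, hqs, star_one]
    have expand : (q + q - 1) * (q + q - 1)
        = ((q * q) + (q * q) + (q * q) + (q * q)) - (q + q + q + q) + 1 := by noncomm_ring
    rw [expand, hq]
    abel
  have hwnorm : ‖q + q - 1‖ = 1 := by
    have h1 : ‖q + q - 1‖ * ‖q + q - 1‖ = 1 := by
      rw [← CStarRing.norm_star_mul_self, hw, norm_one]
    nlinarith [norm_nonneg (q + q - 1)]
  have hlt : ‖(q + q - 1) * (q - p)‖ < 1 := by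
    calc ‖(q + q - 1) * (q - p)‖ ≤ ‖q + q - 1‖ * ‖q - p‖ := norm_mul_le _ _
      _ = ‖p - q‖ := by rw [hwnorm, one_mul, norm_sub_rev]
      _ < 1 := hnorm
  rw [hz]
  exact (Units.oneSub _ hlt).isUnit

lemma abs_min_sub_min (t x y : ℝ) : |min t x - min t y| ≤ |x - y| := by
  rcases abs_cases (x - y) with ⟨e, hxy⟩ | ⟨e, hxy⟩ <;>
    rcases le_total t x with h1 | h1 <;> rcases le_total t y with h2 | h2 <;>
    rw [abs_le] <;> constructor <;>
    simp only [min_eq_left h1, min_eq_right h1, min_eq_left h2, min_eq_right h2, e] <;> linarith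

lemma chain_continuous (P : ℝ → Matrix ι ι ℂ) (h : ℝ) (hP : Continuous P) (k : ℕ) :
    Continuous (chain P h k) := by
  induction k with
  | zero => exact continuous_const
  | succ k ih =>
    refine Continuous.mul ?_ ih
    unfold zmat
    have c1 : Continuous fun t : ℝ => P (min t ((k + 1 : ℕ) * h)) :=
      hP.comp (continuous_id.min continuous_const)
    have c2 : Continuous fun t : ℝ => P (min t ((k : ℕ) * h)) :=
      hP.comp (continuous_id.min continuous_const)
    exact ((c1.mul c2).add ((continuous_const.sub c1).mul (continuous_const.sub c2)))

lemma chain_zero (P : ℝ → Matrix ι ι ℂ) (h : ℝ) (hh : 0 ≤ h)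
    (hid : ∀ t, P t * P t = P t) (k : ℕ) : chain P h k 0 = 1 := by
  induction k with
  | zero => rfl
  | succ k ih =>
    show zmat _ _ * chain P h k 0 = 1
    rw [ih, mul_one]
    have e1 : min (0:ℝ) ((k + 1 : ℕ) * h) = 0 :=
      min_eq_left (by positivity)
    have e2 : min (0:ℝ) ((k : ℕ) * h) = 0 :=
      min_eq_left (by positivity)
    rw [e1, e2, zmat_self (hid 0)]

lemma chain_intertwine (P : ℝ → Matrix ι ι ℂ) (h : ℝ)
    (hid : ∀ t, P t * P t = P t) (k : ℕ) {t : ℝ} (ht : 0 ≤ t) :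
    chain P h k t * P 0 = P (min t ((k : ℕ) * h)) * chain P h k t := by
  induction k with
  | zero =>
    show (1 : Matrix ι ι ℂ) * P 0 = P (min t ((0 : ℕ) * h)) * 1
    rw [one_mul, mul_one]
    norm_num
    rw [min_eq_right ht]
  | succ k ih =>
    show zmat _ _ * chain P h k t * P 0 = _ * (zmat _ _ * chain P h k t)
    rw [mul_assoc, ih, ← mul_assoc, zmat_intertwine (hid _) (hid _), mul_assoc]

lemma chain_isUnit [Nonempty ι] (P : ℝ → Matrix ι ι ℂ) (h : ℝ) (hh : 0 ≤ h)
    (hsa : ∀ t, star (P t) = P t) (hid : ∀ t, P t * P t = P t)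
    (hnear : ∀ s s' : ℝ, |s - s'| ≤ h → ‖P s - P s'‖ < 1) (k : ℕ) (t : ℝ) :
    IsUnit (chain P h k t) := by
  induction k with
  | zero => exact isUnit_one
  | succ k ih =>
    refine (IsUnit.mul ?_ ih)
    refine zmat_isUnit (hsa _) (hid _) ?_
    refine hnear _ _ ?_
    calc |min t ((k : ℕ) * h) - min t ((k + 1 : ℕ) * h)| ≤ |(k : ℕ) * h - (k + 1 : ℕ) * h| :=
          abs_min_sub_min _ _ _
      _ ≤ h := by
          push_cast
          rw [show (k : ℝ) * h - (k + 1) * h = -h by ring, abs_neg, abs_of_nonneg hh]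

/-- Path-conjugation lemma: along a uniformly continuous path of projections there is a
continuous path of invertible matrices intertwining `P 0` with `P t`. -/
lemma pathConj [Nonempty ι] (P : ℝ → Matrix ι ι ℂ) (hP : UniformContinuous P)
    (hsa : ∀ t, star (P t) = P t) (hid : ∀ t, P t * P t = P t) :
    ∃ v : ℝ → Matrix ι ι ℂ, Continuous v ∧ v 0 = 1 ∧ (∀ t, IsUnit (v t)) ∧
      ∀ t ∈ Set.Icc (0:ℝ) 1, v t * P 0 = P t * v t := by
  obtain ⟨δ, hδpos, hδ⟩ := Metric.uniformContinuous_iff.mp hP 1 one_pos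
  set h := δ / 2 with hh
  have hhpos : 0 < h := by positivity
  have hnear : ∀ s s' : ℝ, |s - s'| ≤ h → ‖P s - P s'‖ < 1 := by
    intro s s' hss
    have : dist s s' < δ := by
      rw [Real.dist_eq]
      calc |s - s'| ≤ h := hss
        _ < δ := by rw [hh]; linarith
    simpa [dist_eq_norm] using hδ this
  obtain ⟨K, hK⟩ := exists_nat_ge (1 / h)
  have hK1 : 1 ≤ (K : ℝ) * h := by
    rw [div_le_iff₀ hhpos] at hK
    linarith
  refine ⟨chain P h K, chain_continuous P h hP.continuous K, chain_zero P h hhpos.le hid K,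
    chain_isUnit P h hhpos.le hsa hid hnear K, ?_⟩
  intro t ht
  have : min t ((K : ℕ) * h) = t := min_eq_left (le_trans ht.2 hK1)
  rw [chain_intertwine P h hid K ht.1, this]

end norm

end Path

section MainAux

lemma sum_block_mul_comm (n : ℕ) (A B : Matrix (Fin n ⊕ Fin n) (Fin n ⊕ Fin n) ℂ)
    (hA : ∀ i j, i.isLeft ≠ j.isLeft → A i j = 0)
    (hB : ∀ i j, i.isLeft ≠ j.isLeft → B i j = 0) :
    (∑ i : Fin n, (A * B) (Sum.inl i) (Sum.inl i)
      = ∑ i : Fin n, (B * A) (Sum.inl i) (Sum.inl i))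
    ∧ (∑ i : Fin n, (A * B) (Sum.inr i) (Sum.inr i)
      = ∑ i : Fin n, (B * A) (Sum.inr i) (Sum.inr i)) := by
  have hA1 : ∀ (i j : Fin n), A (Sum.inl i) (Sum.inr j) = 0 := fun i j => hA _ _ (by simp)
  have hA2 : ∀ (i j : Fin n), A (Sum.inr i) (Sum.inl j) = 0 := fun i j => hA _ _ (by simp)
  have hB1 : ∀ (i j : Fin n), B (Sum.inl i) (Sum.inr j) = 0 := fun i j => hB _ _ (by simp)
  have hB2 : ∀ (i j : Fin n), B (Sum.inr i) (Sum.inl j) = 0 := fun i j => hB _ _ (by simp)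
  constructor
  · have L : ∑ i : Fin n, (A * B) (Sum.inl i) (Sum.inl i)
        = ∑ i : Fin n, ∑ j : Fin n, A (Sum.inl i) (Sum.inl j) * B (Sum.inl j) (Sum.inl i) := by
      refine Finset.sum_congr rfl fun i _ => ?_
      rw [Matrix.mul_apply, Fintype.sum_sum_type]
      simp [hA1]
    have R : ∑ i : Fin n, (B * A) (Sum.inl i) (Sum.inl i)
        = ∑ i : Fin n, ∑ j : Fin n, B (Sum.inl i) (Sum.inl j) * A (Sum.inl j) (Sum.inl i) := by
      refine Finset.sum_congr rfl fun i _ => ?_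
      rw [Matrix.mul_apply, Fintype.sum_sum_type]
      simp [hB1]
    rw [L, R, Finset.sum_comm]
    exact Finset.sum_congr rfl fun i _ => Finset.sum_congr rfl fun j _ => mul_comm _ _
  · have L : ∑ i : Fin n, (A * B) (Sum.inr i) (Sum.inr i)
        = ∑ i : Fin n, ∑ j : Fin n, A (Sum.inr i) (Sum.inr j) * B (Sum.inr j) (Sum.inr i) := by
      refine Finset.sum_congr rfl fun i _ => ?_
      rw [Matrix.mul_apply, Fintype.sum_sum_type]
      simp [hA2]
    have R : ∑ i : Fin n, (B * A) (Sum.inr i) (Sum.inr i)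
        = ∑ i : Fin n, ∑ j : Fin n, B (Sum.inr i) (Sum.inr j) * A (Sum.inr j) (Sum.inr i) := by
      refine Finset.sum_congr rfl fun i _ => ?_
      rw [Matrix.mul_apply, Fintype.sum_sum_type]
      simp [hB2]
    rw [L, R, Finset.sum_comm]
    exact Finset.sum_congr rfl fun i _ => Finset.sum_congr rfl fun j _ => mul_comm _ _

lemma blockDiag_eq_fromBlocks {n : ℕ} (A : Matrix (Fin n ⊕ Fin n) (Fin n ⊕ Fin n) ℂ)
    (hA : ∀ i j, i.isLeft ≠ j.isLeft → A i j = 0) :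
    A = Matrix.fromBlocks A.toBlocks₁₁ 0 0 A.toBlocks₂₂ := by
  ext i j
  rcases i with i | i <;> rcases j with j | j
  · rfl
  · simpa using hA (Sum.inl i) (Sum.inr j) (by simp)
  · simpa using hA (Sum.inr i) (Sum.inl j) (by simp)
  · rfl

end MainAux

/-- **Corollary 10.5** (stated for projections in matrix algebras over `D`). Two
projections `e, f` of `D_n` are Murray–von Neumann equivalent in `D_n` if and only if
the traces of the upper-left `n × n` blocks of `e(0)` and `f(0)` agree and the traces
of the lower-right `n × n` blocks of `e(0)` and `f(0)` agree. -/
theorem stmt12 (n : ℕ) (hn : 1 ≤ n)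
    (e f : C(I, Matrix (Fin n ⊕ Fin n) (Fin n ⊕ Fin n) ℂ))
    (he : e ∈ Dn n) (hf : f ∈ Dn n)
    (he_sa : star e = e) (he_idem : e * e = e)
    (hf_sa : star f = f) (hf_idem : f * f = f) :
    (∃ x y : C(I, Matrix (Fin n ⊕ Fin n) (Fin n ⊕ Fin n) ℂ),
        x ∈ Dn n ∧ y ∈ Dn n ∧ e = x * y ∧ f = y * x) ↔
      (∑ i : Fin n, e 0 (Sum.inl i) (Sum.inl i) = ∑ i : Fin n, f 0 (Sum.inl i) (Sum.inl i)) ∧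
      (∑ i : Fin n, e 0 (Sum.inr i) (Sum.inr i) = ∑ i : Fin n, f 0 (Sum.inr i) (Sum.inr i)) := by
  classical
  haveI : Nonempty (Fin n ⊕ Fin n) := ⟨Sum.inl ⟨0, hn⟩⟩
  constructor
  · rintro ⟨x, y, hx, hy, hexy, hfyx⟩
    have h1 := sum_block_mul_comm n (x 0) (y 0) hx hy
    constructor
    · rw [hexy, hfyx]
      simp only [ContinuousMap.mul_apply]
      exact h1.1
    · rw [hexy, hfyx]
      simp only [ContinuousMap.mul_apply]
      exact h1.2
  · rintro ⟨htr1, htr2⟩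
    -- pointwise projection facts
    have esa : ∀ t : I, star (e t) = e t := fun t => by
      conv_rhs => rw [← he_sa]
      exact (ContinuousMap.star_apply e t).symm
    have eidem : ∀ t : I, e t * e t = e t := fun t => by
      conv_rhs => rw [← he_idem]
      exact (ContinuousMap.mul_apply e e t).symm
    have fsa : ∀ t : I, star (f t) = f t := fun t => by
      conv_rhs => rw [← hf_sa]
      exact (ContinuousMap.star_apply f t).symm
    have fidem : ∀ t : I, f t * f t = f t := fun t => by
      conv_rhs => rw [← hf_idem]
      exact (ContinuousMap.mul_apply f f t).symm
    -- the blocks at 0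
    set E1 := (e 0).toBlocks₁₁ with hE1def
    set E2 := (e 0).toBlocks₂₂ with hE2def
    set F1 := (f 0).toBlocks₁₁ with hF1def
    set F2 := (f 0).toBlocks₂₂ with hF2def
    have hE0blocks : e 0 = Matrix.fromBlocks E1 0 0 E2 := blockDiag_eq_fromBlocks _ he
    have hF0blocks : f 0 = Matrix.fromBlocks F1 0 0 F2 := blockDiag_eq_fromBlocks _ hf
    have hE0sa : (e 0).conjTranspose = e 0 := by
      rw [← Matrix.star_eq_conjTranspose]; exact esa 0
    have hF0sa : (f 0).conjTranspose = f 0 := by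
      rw [← Matrix.star_eq_conjTranspose]; exact fsa 0
    -- hermitian blocks
    have hE1sa : E1.conjTranspose = E1 := by
      ext i j
      have h := congrArg (fun M => M (Sum.inl i) (Sum.inl j)) hE0sa
      simpa [Matrix.conjTranspose_apply, hE1def, Matrix.toBlocks₁₁] using h
    have hE2sa : E2.conjTranspose = E2 := by
      ext i j
      have h := congrArg (fun M => M (Sum.inr i) (Sum.inr j)) hE0sa
      simpa [Matrix.conjTranspose_apply, hE2def, Matrix.toBlocks₂₂] using h
    have hF1sa : F1.conjTranspose = F1 := by
      ext i j
      have h := congrArg (fun M => M (Sum.inl i) (Sum.inl j)) hF0sa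
      simpa [Matrix.conjTranspose_apply, hF1def, Matrix.toBlocks₁₁] using h
    have hF2sa : F2.conjTranspose = F2 := by
      ext i j
      have h := congrArg (fun M => M (Sum.inr i) (Sum.inr j)) hF0sa
      simpa [Matrix.conjTranspose_apply, hF2def, Matrix.toBlocks₂₂] using h
    -- idempotent blocks
    have hEmul : Matrix.fromBlocks (E1 * E1 + (0 : Matrix (Fin n) (Fin n) ℂ) * 0)
        (E1 * 0 + 0 * E2) (0 * E1 + E2 * 0) (0 * 0 + E2 * E2) = Matrix.fromBlocks E1 0 0 E2 := by
      rw [← Matrix.fromBlocks_multiply, ← hE0blocks, eidem 0, hE0blocks]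
    have hE1idem : E1 * E1 = E1 := by
      have h := congrArg Matrix.toBlocks₁₁ hEmul
      simpa [Matrix.toBlocks_fromBlocks₁₁] using h
    have hE2idem : E2 * E2 = E2 := by
      have h := congrArg Matrix.toBlocks₂₂ hEmul
      simpa [Matrix.toBlocks_fromBlocks₂₂] using h
    have hFmul : Matrix.fromBlocks (F1 * F1 + (0 : Matrix (Fin n) (Fin n) ℂ) * 0)
        (F1 * 0 + 0 * F2) (0 * F1 + F2 * 0) (0 * 0 + F2 * F2) = Matrix.fromBlocks F1 0 0 F2 := by
      rw [← Matrix.fromBlocks_multiply, ← hF0blocks, fidem 0, hF0blocks]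
    have hF1idem : F1 * F1 = F1 := by
      have h := congrArg Matrix.toBlocks₁₁ hFmul
      simpa [Matrix.toBlocks_fromBlocks₁₁] using h
    have hF2idem : F2 * F2 = F2 := by
      have h := congrArg Matrix.toBlocks₂₂ hFmul
      simpa [Matrix.toBlocks_fromBlocks₂₂] using h
    -- similar blocks
    have htrace1 : E1.trace = F1.trace := by
      simpa [Matrix.trace, Matrix.diag, hE1def, hF1def, Matrix.toBlocks₁₁] using htr1
    have htrace2 : E2.trace = F2.trace := by
      simpa [Matrix.trace, Matrix.diag, hE2def, hF2def, Matrix.toBlocks₂₂] using htr2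
    obtain ⟨S1, S1', h11, h12, h13⟩ := msim_of_trace_eq hE1sa hE1idem hF1sa hF1idem htrace1
    obtain ⟨S2, S2', h21, h22, h23⟩ := msim_of_trace_eq hE2sa hE2idem hF2sa hF2idem htrace2
    set S0 : Matrix (Fin n ⊕ Fin n) (Fin n ⊕ Fin n) ℂ := Matrix.fromBlocks S1 0 0 S2 with hS0def
    set S0' : Matrix (Fin n ⊕ Fin n) (Fin n ⊕ Fin n) ℂ := Matrix.fromBlocks S1' 0 0 S2'
      with hS0'def
    have hSS' : S0 * S0' = 1 := by
      rw [hS0def, hS0'def, Matrix.fromBlocks_multiply]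
      simp only [Matrix.mul_zero, Matrix.zero_mul, add_zero, zero_add, h11, h21]
      exact Matrix.fromBlocks_one
    have hS'S : S0' * S0 = 1 := by
      rw [hS0def, hS0'def, Matrix.fromBlocks_multiply]
      simp only [Matrix.mul_zero, Matrix.zero_mul, add_zero, zero_add, h12, h22]
      exact Matrix.fromBlocks_one
    have hS0E : S0 * e 0 * S0' = f 0 := by
      rw [hE0blocks, hS0def, hS0'def, Matrix.fromBlocks_multiply, Matrix.fromBlocks_multiply]
      rw [hF0blocks]
      simp only [Matrix.mul_zero, Matrix.zero_mul, add_zero, zero_add, Matrix.mul_one,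
        Matrix.one_mul]
      rw [h13, h23]
    -- the paths
    set Pe : ℝ → Matrix (Fin n ⊕ Fin n) (Fin n ⊕ Fin n) ℂ :=
      fun s => e (Set.projIcc 0 1 zero_le_one s) with hPedef
    set Pf : ℝ → Matrix (Fin n ⊕ Fin n) (Fin n ⊕ Fin n) ℂ :=
      fun s => f (Set.projIcc 0 1 zero_le_one s) with hPfdef
    have hPe_uc : UniformContinuous Pe :=
      (CompactSpace.uniformContinuous_of_continuous e.continuous).comp
        (LipschitzWith.projIcc zero_le_one).uniformContinuous
    have hPf_uc : UniformContinuous Pf :=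
      (CompactSpace.uniformContinuous_of_continuous f.continuous).comp
        (LipschitzWith.projIcc zero_le_one).uniformContinuous
    obtain ⟨ve, hvec, hve0, hveu, hvei⟩ :=
      pathConj Pe hPe_uc (fun s => esa _) (fun s => eidem _)
    obtain ⟨vf, hvfc, hvf0, hvfu, hvfi⟩ :=
      pathConj Pf hPf_uc (fun s => fsa _) (fun s => fidem _)
    have hproj0 : Set.projIcc (0:ℝ) 1 zero_le_one 0 = (0 : I) := Set.projIcc_left zero_le_one
    have hprojt : ∀ t : I, Set.projIcc (0:ℝ) 1 zero_le_one ↑t = t := fun t =>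
      (Set.projIcc_of_mem zero_le_one t.2).trans (by simp)
    have hPe0 : Pe 0 = e 0 := by rw [hPedef]; simp only [hproj0]
    have hPf0 : Pf 0 = f 0 := by rw [hPfdef]; simp only [hproj0]
    have hPet : ∀ t : I, Pe ↑t = e t := fun t => by
      simp only [hPedef]; rw [hprojt t]
    have hPft : ∀ t : I, Pf ↑t = f t := fun t => by
      simp only [hPfdef]; rw [hprojt t]
    have hveI : ∀ t : I, ve ↑t * e 0 = e t * ve ↑t := fun t => by
      have h := hvei ↑t ⟨t.2.1, t.2.2⟩
      rwa [hPe0, hPet t] at h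
    have hvfI : ∀ t : I, vf ↑t * f 0 = f t * vf ↑t := fun t => by
      have h := hvfi ↑t ⟨t.2.1, t.2.2⟩
      rwa [hPf0, hPft t] at h
    -- inverses
    have hvedet : ∀ s, IsUnit (ve s).det := fun s => (Matrix.isUnit_iff_isUnit_det _).mp (hveu s)
    have hvfdet : ∀ s, IsUnit (vf s).det := fun s => (Matrix.isUnit_iff_isUnit_det _).mp (hvfu s)
    have hveinv : ∀ s, ve s * (ve s)⁻¹ = 1 := fun s => Matrix.mul_nonsing_inv _ (hvedet s)
    have hveinv' : ∀ s, (ve s)⁻¹ * ve s = 1 := fun s => Matrix.nonsing_inv_mul _ (hvedet s)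
    have hvfinv : ∀ s, vf s * (vf s)⁻¹ = 1 := fun s => Matrix.mul_nonsing_inv _ (hvfdet s)
    have hvfinv' : ∀ s, (vf s)⁻¹ * vf s = 1 := fun s => Matrix.nonsing_inv_mul _ (hvfdet s)
    have hinvcont : ∀ (v : ℝ → Matrix (Fin n ⊕ Fin n) (Fin n ⊕ Fin n) ℂ), Continuous v →
        (∀ s, IsUnit (v s).det) → Continuous fun s : ℝ => (v s)⁻¹ := by
      intro v hv hdet
      have hrw : (fun s : ℝ => (v s)⁻¹) = fun s => ((v s).det)⁻¹ • (v s).adjugate := by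
        funext s; rw [Matrix.inv_def, Ring.inverse_eq_inv']
      rw [hrw]
      exact (hv.matrix_det.inv₀ fun s => (hdet s).ne_zero).smul hv.matrix_adjugate
    have hvecinv := hinvcont ve hvec hvedet
    have hvfcinv := hinvcont vf hvfc hvfdet
    -- conjugation facts
    have he_t : ∀ t : I, (ve ↑t)⁻¹ * e t * ve ↑t = e 0 := fun t => by
      rw [mul_assoc, ← hveI t, ← mul_assoc, hveinv' ↑t, one_mul]
    have hf_t : ∀ t : I, vf ↑t * f 0 * (vf ↑t)⁻¹ = f t := fun t => by
      rw [hvfI t, mul_assoc, hvfinv ↑t, mul_one]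
    -- the witnesses
    have hcx : Continuous fun t : I => e t * (ve ↑t * S0' * (vf ↑t)⁻¹) :=
      e.continuous.mul (((hvec.comp continuous_subtype_val).mul continuous_const).mul
        (hvfcinv.comp continuous_subtype_val))
    have hcy : Continuous fun t : I => (vf ↑t * S0 * (ve ↑t)⁻¹) * e t :=
      ((((hvfc.comp continuous_subtype_val).mul continuous_const).mul
        (hvecinv.comp continuous_subtype_val))).mul e.continuous
    refine ⟨⟨fun t => e t * (ve ↑t * S0' * (vf ↑t)⁻¹), hcx⟩,
      ⟨fun t => (vf ↑t * S0 * (ve ↑t)⁻¹) * e t, hcy⟩, ?_, ?_, ?_, ?_⟩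
    · -- x ∈ Dn n
      intro i j hij
      show (e 0 * (ve ↑(0:I) * S0' * (vf ↑(0:I))⁻¹)) i j = 0
      rw [show ((0:I) : ℝ) = (0:ℝ) from rfl, hve0, hvf0, inv_one, one_mul, mul_one]
      rw [hE0blocks, hS0'def, Matrix.fromBlocks_multiply]
      rcases i with i | i <;> rcases j with j | j
      · simp at hij
      · simp
      · simp
      · simp at hij
    · -- y ∈ Dn n
      intro i j hij
      show ((vf ↑(0:I) * S0 * (ve ↑(0:I))⁻¹) * e 0) i j = 0
      rw [show ((0:I) : ℝ) = (0:ℝ) from rfl, hve0, hvf0, inv_one, one_mul, mul_one]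
      rw [hE0blocks, hS0def, Matrix.fromBlocks_multiply]
      rcases i with i | i <;> rcases j with j | j
      · simp at hij
      · simp
      · simp
      · simp at hij
    · -- e = x * y
      refine ContinuousMap.ext fun t => ?_
      simp only [ContinuousMap.mul_apply, ContinuousMap.coe_mk]
      symm
      have hmid : (ve ↑t * S0' * (vf ↑t)⁻¹) * (vf ↑t * S0 * (ve ↑t)⁻¹) = 1 := by
        calc (ve ↑t * S0' * (vf ↑t)⁻¹) * (vf ↑t * S0 * (ve ↑t)⁻¹)
            = ve ↑t * ((S0' * ((vf ↑t)⁻¹ * vf ↑t)) * S0) * (ve ↑t)⁻¹ := by noncomm_ring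
          _ = ve ↑t * (S0' * S0) * (ve ↑t)⁻¹ := by rw [hvfinv' ↑t, mul_one]
          _ = ve ↑t * (ve ↑t)⁻¹ := by rw [hS'S, mul_one]
          _ = 1 := hveinv ↑t
      calc e t * (ve ↑t * S0' * (vf ↑t)⁻¹) * ((vf ↑t * S0 * (ve ↑t)⁻¹) * e t)
          = e t * ((ve ↑t * S0' * (vf ↑t)⁻¹) * (vf ↑t * S0 * (ve ↑t)⁻¹)) * e t := by
            noncomm_ring
        _ = e t * e t := by rw [hmid, mul_one]
        _ = e t := eidem t
    · -- f = y * x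
      refine ContinuousMap.ext fun t => ?_
      simp only [ContinuousMap.mul_apply, ContinuousMap.coe_mk]
      symm
      calc (vf ↑t * S0 * (ve ↑t)⁻¹) * e t * (e t * (ve ↑t * S0' * (vf ↑t)⁻¹))
          = vf ↑t * S0 * ((ve ↑t)⁻¹ * (e t * e t) * ve ↑t) * S0' * (vf ↑t)⁻¹ := by
            noncomm_ring
        _ = vf ↑t * S0 * ((ve ↑t)⁻¹ * e t * ve ↑t) * S0' * (vf ↑t)⁻¹ := by rw [eidem t]
        _ = vf ↑t * S0 * e 0 * S0' * (vf ↑t)⁻¹ := by rw [he_t t]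
        _ = vf ↑t * (S0 * e 0 * S0') * (vf ↑t)⁻¹ := by noncomm_ring
        _ = vf ↑t * f 0 * (vf ↑t)⁻¹ := by rw [hS0E]
        _ = f t := hf_t t
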